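/- Let n ≥ 1, let x₁,…,xₙ, y₁,…,yₙ ∈ ℝ³ be nonzero vectors, let a, b ∈ ℝ³ be nonzero vectors, and let A₀, B₀ be flatland cameras (real 2×3 matrices of rank 2) with A₀·a = 0, B₀·b = 0, and A₀·xᵢ ≠ 0 and B₀·yᵢ ≠ 0 for every i. Then the following are equivalent: (i) there exist flatland cameras A and B with A·a = 0 and B·b = 0 such that for every i, A·xᵢ ≠ 0 and A·xᵢ ∼ B·yᵢ; (ii) there exists an invertible real 2×2 matrix H such that for every i, H·A₀·xᵢ ∼ B₀·yᵢ. -/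
import Mathlib

open Matrix

/-- `u ∼ v`: the vectors are equal up to a nonzero real scalar. -/
def Sim {k : ℕ} (u v : Fin k → ℝ) : Prop := ∃ c : ℝ, c ≠ 0 ∧ u = c • v

lemma rank_two_surjective (A : Matrix (Fin 2) (Fin 3) ℝ) (hA : A.rank = 2) :
    Function.Surjective A.mulVecLin := by
  rw [← LinearMap.range_eq_top]
  apply Submodule.eq_top_of_finrank_eq
  have : Module.finrank ℝ (Fin 2 → ℝ) = 2 := by simp
  rw [this]
  exact hA

lemma ker_eq_span (A : Matrix (Fin 2) (Fin 3) ℝ) (hA : A.rank = 2)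
    (a : Fin 3 → ℝ) (ha : a ≠ 0) (hAa : A.mulVec a = 0) :
    LinearMap.ker A.mulVecLin = Submodule.span ℝ {a} := by
  have hrn := LinearMap.finrank_range_add_finrank_ker A.mulVecLin
  have hdom : Module.finrank ℝ (Fin 3 → ℝ) = 3 := by simp
  have hker : Module.finrank ℝ (LinearMap.ker A.mulVecLin) = 1 := by
    have hr2 : Module.finrank ℝ (LinearMap.range A.mulVecLin) = 2 := hA
    rw [hdom, hr2] at hrn
    omega
  have hle : Submodule.span ℝ {a} ≤ LinearMap.ker A.mulVecLin := by
    rw [Submodule.span_le, Set.singleton_subset_iff]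
    simpa [LinearMap.mem_ker, Matrix.mulVecLin_apply] using hAa
  have hspan : Module.finrank ℝ (Submodule.span ℝ {a}) = 1 :=
    finrank_span_singleton ha
  exact (Submodule.eq_of_le_of_finrank_le hle (by rw [hker, hspan])).symm

/-- If `A` and `A₀` are rank-2 cameras with the same nonzero center `a`,
then `A = M * A₀` for some invertible `M`. -/
lemma factor_through (A A₀ : Matrix (Fin 2) (Fin 3) ℝ)
    (hA : A.rank = 2) (hA₀ : A₀.rank = 2)
    (a : Fin 3 → ℝ) (ha : a ≠ 0) (hAa : A.mulVec a = 0) (hA₀a : A₀.mulVec a = 0) :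
    ∃ M : Matrix (Fin 2) (Fin 2) ℝ, M.det ≠ 0 ∧ A = M * A₀ := by
  set f := A.mulVecLin with hf
  set f₀ := A₀.mulVecLin with hf₀
  have hkers : LinearMap.ker f₀ = LinearMap.ker f := by
    rw [ker_eq_span A hA a ha hAa, ker_eq_span A₀ hA₀ a ha hA₀a]
  have hs : Function.Surjective f := rank_two_surjective A hA
  have hs₀ : Function.Surjective f₀ := rank_two_surjective A₀ hA₀
  let g : ((Fin 3) → ℝ) ⧸ LinearMap.ker f₀ →ₗ[ℝ] (Fin 2) → ℝ :=
    (LinearMap.ker f₀).liftQ f (le_of_eq hkers)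
  let e := f₀.quotKerEquivOfSurjective hs₀
  let g' : ((Fin 2) → ℝ) →ₗ[ℝ] (Fin 2) → ℝ := g ∘ₗ e.symm.toLinearMap
  have hcomp : g' ∘ₗ f₀ = f := by
    apply LinearMap.ext
    intro v
    show g (e.symm (f₀ v)) = f v
    have he : e.symm (f₀ v) = Submodule.Quotient.mk (p := LinearMap.ker f₀) v := by
      apply e.injective
      simp only [LinearEquiv.apply_symm_apply]
      rfl
    rw [he]
    rfl
  have hgsurj : Function.Surjective g' := by
    intro w
    obtain ⟨v, hv⟩ := hs w
    exact ⟨f₀ v, by rw [← LinearMap.comp_apply, hcomp, hv]⟩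
  have hginj : Function.Injective g' :=
    (LinearMap.injective_iff_surjective_of_finrank_eq_finrank rfl).mpr hgsurj
  refine ⟨LinearMap.toMatrix' g', ?_, ?_⟩
  · rw [LinearMap.det_toMatrix']
    exact isUnit_iff_ne_zero.mp (LinearEquiv.ofBijective g' ⟨hginj, hgsurj⟩).isUnit_det'
  · have hA' : A = LinearMap.toMatrix' f := by
      rw [hf, ← Matrix.toLin'_apply', LinearMap.toMatrix'_toLin']
    have hA₀' : LinearMap.toMatrix' f₀ = A₀ := by
      rw [hf₀, ← Matrix.toLin'_apply', LinearMap.toMatrix'_toLin']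
    rw [hA', ← hcomp, LinearMap.toMatrix'_comp, hA₀']

/-- The unnumbered lemma of Section 3: two point sets have a common image from
centers `a` and `b` iff the GL(2)-orbits of their images under any fixed
cameras `A₀`, `B₀` with these centers coincide. -/
theorem common_image_iff_orbits_coincide
    (n : ℕ) (hn : 1 ≤ n)
    (x y : Fin n → Fin 3 → ℝ)
    (hx : ∀ i, x i ≠ 0) (hy : ∀ i, y i ≠ 0)
    (a b : Fin 3 → ℝ) (ha : a ≠ 0) (hb : b ≠ 0)
    (A₀ B₀ : Matrix (Fin 2) (Fin 3) ℝ)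
    (hA₀ : A₀.rank = 2) (hB₀ : B₀.rank = 2)
    (hA₀a : A₀.mulVec a = 0) (hB₀b : B₀.mulVec b = 0)
    (hA₀x : ∀ i, A₀.mulVec (x i) ≠ 0) (hB₀y : ∀ i, B₀.mulVec (y i) ≠ 0) :
    (∃ A B : Matrix (Fin 2) (Fin 3) ℝ,
        A.rank = 2 ∧ B.rank = 2 ∧ A.mulVec a = 0 ∧ B.mulVec b = 0 ∧
        ∀ i, A.mulVec (x i) ≠ 0 ∧ Sim (A.mulVec (x i)) (B.mulVec (y i)))
    ↔
    (∃ H : Matrix (Fin 2) (Fin 2) ℝ, H.det ≠ 0 ∧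
        ∀ i, Sim (H.mulVec (A₀.mulVec (x i))) (B₀.mulVec (y i))) := by
  constructor
  · rintro ⟨A, B, hArank, hBrank, hAa, hBb, hi⟩
    obtain ⟨M, hMdet, hAM⟩ := factor_through A A₀ hArank hA₀ a ha hAa hA₀a
    obtain ⟨N, hNdet, hBN⟩ := factor_through B B₀ hBrank hB₀ b hb hBb hB₀b
    haveI : Invertible N := N.invertibleOfIsUnitDet (isUnit_iff_ne_zero.mpr hNdet)
    refine ⟨N⁻¹ * M, ?_, ?_⟩
    · rw [Matrix.det_mul]
      exact mul_ne_zero (Matrix.isUnit_nonsing_inv_det N (isUnit_iff_ne_zero.mpr hNdet)).ne_zero hMdet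
    · intro i
      obtain ⟨_, c, hc, hcv⟩ := hi i
      refine ⟨c, hc, ?_⟩
      have h1 : A.mulVec (x i) = M.mulVec (A₀.mulVec (x i)) := by
        rw [hAM, Matrix.mulVec_mulVec]
      have h2 : B.mulVec (y i) = N.mulVec (B₀.mulVec (y i)) := by
        rw [hBN, Matrix.mulVec_mulVec]
      rw [h1, h2] at hcv
      calc (N⁻¹ * M) *ᵥ (A₀ *ᵥ x i)
          = N⁻¹ *ᵥ (M *ᵥ (A₀ *ᵥ x i)) := (Matrix.mulVec_mulVec _ _ _).symm
        _ = N⁻¹ *ᵥ (c • (N *ᵥ (B₀ *ᵥ y i))) := by rw [hcv]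
        _ = c • (N⁻¹ *ᵥ (N *ᵥ (B₀ *ᵥ y i))) := by rw [Matrix.mulVec_smul]
        _ = c • ((N⁻¹ * N) *ᵥ (B₀ *ᵥ y i)) := by rw [Matrix.mulVec_mulVec]
        _ = c • (B₀ *ᵥ y i) := by
            rw [Matrix.nonsing_inv_mul N (isUnit_iff_ne_zero.mpr hNdet), Matrix.one_mulVec]
  · rintro ⟨H, hHdet, hi⟩
    refine ⟨H * A₀, B₀, ?_, hB₀, ?_, hB₀b, ?_⟩
    · rw [Matrix.rank_mul_eq_right_of_isUnit_det H A₀ (isUnit_iff_ne_zero.mpr hHdet)]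
      exact hA₀
    · rw [← Matrix.mulVec_mulVec, hA₀a, Matrix.mulVec_zero]
    · intro i
      haveI : Invertible H := H.invertibleOfIsUnitDet (isUnit_iff_ne_zero.mpr hHdet)
      constructor
      · intro hcon
        rw [← Matrix.mulVec_mulVec] at hcon
        apply hA₀x i
        have key : H⁻¹ *ᵥ (H *ᵥ (A₀ *ᵥ x i)) = A₀ *ᵥ x i := by
          rw [Matrix.mulVec_mulVec, Matrix.nonsing_inv_mul H (isUnit_iff_ne_zero.mpr hHdet),
            Matrix.one_mulVec]
        rw [← key, hcon, Matrix.mulVec_zero]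
      · rw [← Matrix.mulVec_mulVec]
        exact hi i
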